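/- arXiv:2307.01218 — 3 statements merged into one kernel-verified Lean document; each statement's English description precedes it below -/
import Mathlib

section
/- Let n ≥ 35, let G' be a finite simple graph on the vertex set {1,…,n−1}, and let G be the graph on {1,…,n} obtained from G' by adding the new vertex n together with the single edge {n−1, n}. Then the second-smallest Laplacian eigenvalue of G satisfies λ₂(L_G) ≥ min{ 0.04, 0.3 · λ₂(L_{G'}) }. In particular, if G' is connected with λ₂(L_{G'}) ≥ c > 0, then G is connected with λ₂(L_G) ≥ min{0.04, 0.3c} > 0. -/
open Matrix

/-- The eigenvalues of a real symmetric matrix, listed in non-decreasing order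
(with multiplicity); junk value `0` if the matrix is not symmetric. -/
noncomputable def sortedEigenvalues {n : ℕ} (M : Matrix (Fin n) (Fin n) ℝ) : Fin n → ℝ :=
  if h : M.IsHermitian then h.eigenvalues ∘ Tuple.sort h.eigenvalues else 0

open Classical in
/-- The (real) Laplacian matrix of a graph on `Fin n`. -/
noncomputable def lap {n : ℕ} (G : SimpleGraph (Fin n)) : Matrix (Fin n) (Fin n) ℝ :=
  G.lapMatrix ℝ

section helpers
variable {N : ℕ} {M : Matrix (Fin N) (Fin N) ℝ}

lemma sorted_eq (hM : M.IsHermitian) (k : Fin N) :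
    sortedEigenvalues M k = hM.eigenvalues (Tuple.sort hM.eigenvalues k) := by
  rw [sortedEigenvalues, dif_pos hM]; rfl

lemma sorted_nonneg (hPSD : M.PosSemidef) (k : Fin N) : 0 ≤ sortedEigenvalues M k := by
  rw [sorted_eq hPSD.1]; exact hPSD.eigenvalues_nonneg _

lemma sorted_mono (hM : M.IsHermitian) {j k : Fin N} (h : j ≤ k) :
    sortedEigenvalues M j ≤ sortedEigenvalues M k := by
  rw [sorted_eq hM, sorted_eq hM]
  exact Tuple.monotone_sort hM.eigenvalues h

lemma mu_ge (hM : M.IsHermitian) (hN : 1 < N) {j : Fin N}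
    (hj : j ≠ Tuple.sort hM.eigenvalues ⟨0, by omega⟩) :
    sortedEigenvalues M ⟨1, hN⟩ ≤ hM.eigenvalues j := by
  rw [sorted_eq hM]
  have he : j = Tuple.sort hM.eigenvalues ((Tuple.sort hM.eigenvalues).symm j) :=
    (Equiv.apply_symm_apply _ _).symm
  have h01 : (⟨1, hN⟩ : Fin N) ≤ (Tuple.sort hM.eigenvalues).symm j := by
    have hne : (Tuple.sort hM.eigenvalues).symm j ≠ ⟨0, by omega⟩ := by
      intro h; apply hj; rw [← h]; exact he
    rw [Fin.le_def]
    have := Fin.val_ne_of_ne hne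
    simp only [Fin.val_mk] at this ⊢
    omega
  calc hM.eigenvalues (Tuple.sort hM.eigenvalues ⟨1, hN⟩)
      ≤ hM.eigenvalues (Tuple.sort hM.eigenvalues ((Tuple.sort hM.eigenvalues).symm j)) :=
        Tuple.monotone_sort hM.eigenvalues h01
    _ = hM.eigenvalues j := by rw [← he]
lemma inner_eq_dot (x y : EuclideanSpace ℝ (Fin N)) : (inner ℝ x y : ℝ) = ⇑x ⬝ᵥ ⇑y := by
  simp [PiLp.inner_apply, RCLike.inner_apply, dotProduct, conj_trivial, mul_comm]

lemma dot_eq_sum (hM : M.IsHermitian) (x y : Fin N → ℝ) :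
    x ⬝ᵥ y = ∑ j, (⇑(hM.eigenvectorBasis j) ⬝ᵥ x) * (⇑(hM.eigenvectorBasis j) ⬝ᵥ y) := by
  have e1 : x ⬝ᵥ y = (inner (𝕜 := ℝ) (E := EuclideanSpace ℝ (Fin N)) (WithLp.toLp 2 x) (WithLp.toLp 2 y)) :=
    (inner_eq_dot _ _).symm
  rw [e1, ← (hM.eigenvectorBasis).sum_inner_mul_inner]
  refine Finset.sum_congr rfl fun j _ => ?_
  have a1 : (inner (𝕜 := ℝ) (E := EuclideanSpace ℝ (Fin N)) (WithLp.toLp 2 x) (hM.eigenvectorBasis j))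
      = ⇑(hM.eigenvectorBasis j) ⬝ᵥ x := by rw [inner_eq_dot]; exact dotProduct_comm _ _
  have a2 : (inner (𝕜 := ℝ) (E := EuclideanSpace ℝ (Fin N)) (hM.eigenvectorBasis j) (WithLp.toLp 2 y))
      = ⇑(hM.eigenvectorBasis j) ⬝ᵥ y := inner_eq_dot _ _
  rw [a1, a2]

lemma transpose_of_herm (hM : M.IsHermitian) : Mᵀ = M := by
  have := hM; rwa [IsHermitian, conjTranspose_eq_transpose_of_trivial] at this

lemma dot_mulVec_basis (hM : M.IsHermitian) (x : Fin N → ℝ) (j : Fin N) :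
    ⇑(hM.eigenvectorBasis j) ⬝ᵥ (M *ᵥ x) = hM.eigenvalues j * (⇑(hM.eigenvectorBasis j) ⬝ᵥ x) := by
  rw [dotProduct_mulVec, ← mulVec_transpose, transpose_of_herm hM, hM.mulVec_eigenvectorBasis]
  simp [smul_dotProduct]

lemma norm_basis_dot (hM : M.IsHermitian) (j : Fin N) :
    ⇑(hM.eigenvectorBasis j) ⬝ᵥ ⇑(hM.eigenvectorBasis j) = 1 := by
  have h1 := (hM.eigenvectorBasis).orthonormal.1 j
  rw [← inner_eq_dot, real_inner_self_eq_norm_sq, h1]; norm_num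

lemma orth_basis_dot (hM : M.IsHermitian) {i j : Fin N} (h : i ≠ j) :
    ⇑(hM.eigenvectorBasis i) ⬝ᵥ ⇑(hM.eigenvectorBasis j) = 0 := by
  rw [← inner_eq_dot]
  exact (hM.eigenvectorBasis).orthonormal.2 h

/-- quadratic form in eigencoordinates -/
lemma quad_eq_sum (hM : M.IsHermitian) (x : Fin N → ℝ) :
    x ⬝ᵥ (M *ᵥ x) = ∑ j, hM.eigenvalues j * (⇑(hM.eigenvectorBasis j) ⬝ᵥ x)^2 := by
  rw [dot_eq_sum hM]
  refine Finset.sum_congr rfl fun j _ => ?_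
  rw [dot_mulVec_basis hM]; ring

lemma dot_self_eq_sum (hM : M.IsHermitian) (x : Fin N → ℝ) :
    x ⬝ᵥ x = ∑ j, (⇑(hM.eigenvectorBasis j) ⬝ᵥ x)^2 := by
  rw [dot_eq_sum hM x x]
  exact Finset.sum_congr rfl fun j _ => (sq _).symm

lemma coeff_zero_of_ker (hM : M.IsHermitian) (hN : 1 < N)
    (hpos : 0 < sortedEigenvalues M ⟨1, hN⟩)
    {y : Fin N → ℝ} (hy : M *ᵥ y = 0) {k : Fin N}
    (hk : k ≠ Tuple.sort hM.eigenvalues ⟨0, by omega⟩) :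
    ⇑(hM.eigenvectorBasis k) ⬝ᵥ y = 0 := by
  have hh := dot_mulVec_basis hM y k
  rw [hy, dotProduct_zero] at hh
  have h2 := mu_ge hM hN hk
  have h3 : hM.eigenvalues k ≠ 0 := by linarith
  exact (mul_eq_zero.mp hh.symm).resolve_left h3

lemma d0_ne_zero (hM : M.IsHermitian) (hN : 1 < N)
    (hpos : 0 < sortedEigenvalues M ⟨1, hN⟩)
    (h1 : M *ᵥ (fun _ => (1:ℝ)) = 0) :
    ⇑(hM.eigenvectorBasis (Tuple.sort hM.eigenvalues ⟨0, by omega⟩)) ⬝ᵥ (fun _ => (1:ℝ)) ≠ 0 := by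
  set i0 := Tuple.sort hM.eigenvalues ⟨0, by omega⟩ with hi0
  have hNN : ((fun _ : Fin N => (1:ℝ)) ⬝ᵥ (fun _ : Fin N => (1:ℝ))) = (N:ℝ) := by simp [dotProduct]
  have hsum := dot_self_eq_sum hM (fun _ => (1:ℝ))
  rw [Finset.sum_eq_single i0
    (fun k _ hk => by rw [coeff_zero_of_ker hM hN hpos h1 hk]; ring) (by simp), hNN] at hsum
  intro hzero
  rw [hzero] at hsum
  have : (0:ℝ) < (N:ℝ) := by exact_mod_cast Nat.lt_of_lt_of_le Nat.zero_lt_one hN.le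
  simp at hsum
  linarith

lemma ker_const (hM : M.IsHermitian) (hN : 1 < N)
    (h1 : M *ᵥ (fun _ => (1:ℝ)) = 0)
    (hpos : 0 < sortedEigenvalues M ⟨1, hN⟩)
    {x : Fin N → ℝ} (hx : M *ᵥ x = 0) (i j : Fin N) : x i = x j := by
  rcases eq_or_ne i j with rfl | hij
  · rfl
  set i0 := Tuple.sort hM.eigenvalues ⟨0, by omega⟩ with hi0
  set e : Fin N → ℝ := fun v => (if v = i then (1:ℝ) else 0) - (if v = j then 1 else 0) with he
  have hedot : ∀ y : Fin N → ℝ, e ⬝ᵥ y = y i - y j := by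
    intro y
    simp [he, dotProduct, sub_mul, ite_mul, Finset.sum_sub_distrib]
  have key : ∀ y : Fin N → ℝ, M *ᵥ y = 0 →
      e ⬝ᵥ y = (⇑(hM.eigenvectorBasis i0) ⬝ᵥ e) * (⇑(hM.eigenvectorBasis i0) ⬝ᵥ y) := by
    intro y hy
    rw [dot_eq_sum hM e y]
    exact Finset.sum_eq_single i0
      (fun k _ hk => by rw [coeff_zero_of_ker hM hN hpos hy hk]; ring) (by simp)
  have h1' := key _ h1
  rw [hedot] at h1'
  simp only [sub_self] at h1'
  have hd0 := d0_ne_zero hM hN hpos h1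
  have hce : ⇑(hM.eigenvectorBasis i0) ⬝ᵥ e = 0 := by
    rcases mul_eq_zero.mp h1'.symm with h | h
    · exact h
    · exact absurd h hd0
  have h2 := key _ hx
  rw [hedot, hce, zero_mul] at h2
  linarith

lemma rayleigh_lower (hM : M.IsHermitian) (hPSD : M.PosSemidef) (hN : 1 < N)
    (h1 : M *ᵥ (fun _ => (1:ℝ)) = 0) {φ : Fin N → ℝ}
    (hφ : (fun _ => (1:ℝ)) ⬝ᵥ φ = 0) :
    sortedEigenvalues M ⟨1, hN⟩ * (φ ⬝ᵥ φ) ≤ φ ⬝ᵥ (M *ᵥ φ) := by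
  set lam := sortedEigenvalues M ⟨1, hN⟩ with hlam
  have hφφ : 0 ≤ φ ⬝ᵥ φ := Finset.sum_nonneg fun i _ => mul_self_nonneg _
  rcases le_or_gt lam 0 with h | h
  · have h2 : 0 ≤ φ ⬝ᵥ (M *ᵥ φ) := by
      have := hPSD.dotProduct_mulVec_nonneg φ; simpa using this
    nlinarith
  · set i0 := Tuple.sort hM.eigenvalues ⟨0, by omega⟩ with hi0
    have hd : ∀ k, k ≠ i0 → ⇑(hM.eigenvectorBasis k) ⬝ᵥ (fun _ => (1:ℝ)) = 0 :=
      fun k hk => coeff_zero_of_ker hM hN h h1 hk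
    have hd0 := d0_ne_zero hM hN h h1
    have hc0 : ⇑(hM.eigenvectorBasis i0) ⬝ᵥ φ = 0 := by
      have hds := dot_eq_sum hM (fun _ => (1:ℝ)) φ
      rw [hφ, Finset.sum_eq_single i0 (fun k _ hk => by rw [hd k hk]; ring) (by simp)] at hds
      exact (mul_eq_zero.mp hds.symm).resolve_left hd0
    rw [quad_eq_sum hM, dot_self_eq_sum hM, Finset.mul_sum]
    refine Finset.sum_le_sum fun k _ => ?_
    rcases eq_or_ne k i0 with rfl | hk
    · rw [hc0]; simp
    · have := mu_ge hM hN hk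
      nlinarith [sq_nonneg (⇑(hM.eigenvectorBasis k) ⬝ᵥ φ)]

end helpers


lemma lap_eq {k : ℕ} (G : SimpleGraph (Fin k)) [inst : DecidableRel G.Adj] :
    lap G = G.lapMatrix ℝ := by
  unfold lap; congr!


set_option maxHeartbeats 1000000 in
/-- **Adding a pendant vertex keeps the spectral gap.**
Let `n ≥ 35`, let `G'` be a graph on the vertices `{1, …, n-1}` (modelled as `Fin (n-1)`,
vertex `i` corresponding to index `i - 1`), and let `G` on `{1, …, n}` (modelled as `Fin n`)
be obtained from `G'` by adding the new vertex `n` together with the single edge `{n-1, n}`.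
Then `λ₂(L_G) ≥ min(0.04, 0.3 · λ₂(L_{G'}))`.  In particular, if `G'` is connected then so
is `G`. -/
theorem lambda2_pendant_vertex
    (n : ℕ) (hn : 35 ≤ n)
    (G' : SimpleGraph (Fin (n - 1))) (G : SimpleGraph (Fin n))
    (hAdj : ∀ a b : Fin n, G.Adj a b ↔
      ((∃ (ha : a.1 < n - 1) (hb : b.1 < n - 1), G'.Adj ⟨a.1, ha⟩ ⟨b.1, hb⟩) ∨
        (a.1 = n - 2 ∧ b.1 = n - 1) ∨ (a.1 = n - 1 ∧ b.1 = n - 2))) :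
    min 0.04 (0.3 * sortedEigenvalues (lap G') ⟨1, by omega⟩) ≤
        sortedEigenvalues (lap G) ⟨1, by omega⟩ ∧
      (G'.Connected → G.Connected) := by
  classical
  obtain ⟨m, rfl⟩ : ∃ m, n = m + 1 := ⟨n - 1, by omega⟩
  have hm : 34 ≤ m := by omega
  set pt : Fin m := ⟨m - 1, by omega⟩ with hpt
  set p : Fin (m + 1) := pt.castSucc with hp
  -- adjacency facts
  have hadj_cast : ∀ i j : Fin m, G.Adj i.castSucc j.castSucc ↔ G'.Adj i j := by
    intro i j
    rw [hAdj]
    constructor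
    · rintro (⟨ha, hb, h⟩ | ⟨h1, h2⟩ | ⟨h1, h2⟩)
      · have e1 : (⟨(Fin.castSucc i).1, ha⟩ : Fin (m + 1 - 1)) = i := Fin.ext rfl
        have e2 : (⟨(Fin.castSucc j).1, hb⟩ : Fin (m + 1 - 1)) = j := Fin.ext rfl
        rwa [e1, e2] at h
      · simp only [Fin.coe_castSucc] at h2; omega
      · simp only [Fin.coe_castSucc] at h1; omega
    · intro h
      left
      have hi : (Fin.castSucc i).1 < m + 1 - 1 := by
        simp only [Fin.coe_castSucc]; omega
      have hj : (Fin.castSucc j).1 < m + 1 - 1 := by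
        simp only [Fin.coe_castSucc]; omega
      refine ⟨hi, hj, ?_⟩
      have e1 : (⟨(Fin.castSucc i).1, hi⟩ : Fin (m + 1 - 1)) = i := Fin.ext rfl
      have e2 : (⟨(Fin.castSucc j).1, hj⟩ : Fin (m + 1 - 1)) = j := Fin.ext rfl
      rwa [e1, e2]
  have hadj_cast_last : ∀ i : Fin m, G.Adj i.castSucc (Fin.last m) ↔ i = pt := by
    intro i
    rw [hAdj]
    constructor
    · rintro (⟨ha, hb, h⟩ | ⟨h1, h2⟩ | ⟨h1, h2⟩)
      · rw [Fin.val_last] at hb; omega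
      · simp only [Fin.coe_castSucc] at h1
        exact Fin.ext (by simp only [hpt]; omega)
      · simp only [Fin.coe_castSucc] at h1; omega
    · rintro rfl
      right; left
      refine ⟨by simp only [Fin.coe_castSucc, hpt]; omega, by rw [Fin.val_last]; omega⟩
  have hadj_last : ∀ b : Fin (m + 1), G.Adj (Fin.last m) b ↔ b = p := by
    intro b
    rw [hAdj]
    constructor
    · rintro (⟨ha, hb, h⟩ | ⟨h1, h2⟩ | ⟨h1, h2⟩)
      · rw [Fin.val_last] at ha; omega
      · rw [Fin.val_last] at h1; omega
      · exact Fin.ext (by simp only [hp, hpt, Fin.coe_castSucc, h2]; omega)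
    · rintro rfl
      right; right
      exact ⟨by rw [Fin.val_last]; omega, by simp only [hp, hpt, Fin.coe_castSucc]; omega⟩
  -- connectivity transfer
  have hconn : G'.Connected → G.Connected := by
    intro hG'
    have hreach : ∀ c : Fin (m + 1), G.Reachable c p := by
      intro c
      by_cases hc : c.1 < m
      · have h1 : G'.Reachable ⟨c.1, hc⟩ pt := hG'.preconnected _ _
        exact h1.map ⟨Fin.castSucc, fun {a b} h => (hadj_cast a b).mpr h⟩
      · have e : c = Fin.last m := Fin.ext (by rw [Fin.val_last]; omega)
        rw [e]
        exact ((hadj_last p).mpr rfl).reachable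
    rw [SimpleGraph.connected_iff]
    exact ⟨fun a b => (hreach a).trans (hreach b).symm, ⟨p⟩⟩
  refine ⟨?_, hconn⟩
  -- spectral part
  by_contra hcon
  push_neg at hcon
  set lam := sortedEigenvalues (lap G) ⟨1, by omega⟩ with hlamdef
  set lam' := sortedEigenvalues (lap G') ⟨1, by omega⟩ with hlam'def
  have hlam04 : lam < 0.04 := lt_of_lt_of_le hcon (min_le_left _ _)
  have hlam3 : lam < 0.3 * lam' := lt_of_lt_of_le hcon (min_le_right _ _)
  have hPSD : (lap G).PosSemidef := by rw [lap_eq]; exact SimpleGraph.posSemidef_lapMatrix ℝ G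
  have hPSD' : (lap G').PosSemidef := by rw [lap_eq]; exact SimpleGraph.posSemidef_lapMatrix ℝ G'
  have hH : (lap G).IsHermitian := hPSD.1
  have hH' : (lap G').IsHermitian := hPSD'.1
  have h1 : lap G *ᵥ (fun _ => (1:ℝ)) = 0 := by
    rw [lap_eq]; exact SimpleGraph.lapMatrix_mulVec_const_eq_zero (R := ℝ) G
  have h1' : lap G' *ᵥ (fun _ => (1:ℝ)) = 0 := by
    rw [lap_eq]; exact SimpleGraph.lapMatrix_mulVec_const_eq_zero (R := ℝ) G'
  have hN : 1 < m + 1 := by omega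
  have hN' : 1 < m + 1 - 1 := by omega
  have hlam_nn : 0 ≤ lam := sorted_nonneg hPSD _
  have hlam'pos : (0:ℝ) < lam' := by nlinarith
  -- G' is connected
  have hG'conn : G'.Connected := by
    rw [SimpleGraph.connected_iff]
    refine ⟨fun i j => ?_, ⟨⟨0, by omega⟩⟩⟩
    set x : Fin (m + 1 - 1) → ℝ := fun v => if G'.Reachable i v then 1 else 0 with hx
    have hker : lap G' *ᵥ x = 0 := by
      rw [lap_eq]
      have h2 : Matrix.toLin' (G'.lapMatrix ℝ) x = 0 := by
        rw [Matrix.toLin'_apply, SimpleGraph.lapMatrix_mulVec_eq_zero_iff_forall_adj]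
        intro a b hab
        simp only [hx]
        by_cases h : G'.Reachable i a
        · rw [if_pos h, if_pos (h.trans hab.reachable)]
        · rw [if_neg h, if_neg (fun hr => h (hr.trans hab.symm.reachable))]
      rwa [Matrix.toLin'_apply] at h2
    have hxij := ker_const hH' hN' h1' hlam'pos hker i j
    simp only [hx] at hxij
    rw [if_pos (SimpleGraph.Reachable.refl i)] at hxij
    by_contra hnr
    rw [if_neg hnr] at hxij
    norm_num at hxij
  have hGconn : G.Connected := hconn hG'conn
  -- lam ≠ 0
  have hlam_pos : 0 < lam := by
    rcases lt_or_eq_of_le hlam_nn with h | h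
    · exact h
    exfalso
    have hlam0 : lam = 0 := h.symm
    have hs0 : sortedEigenvalues (lap G) ⟨0, by omega⟩ = 0 :=
      le_antisymm (by rw [← hlam0]; exact sorted_mono hH (by simp [Fin.le_def]))
        (sorted_nonneg hPSD _)
    set u0 : Fin (m+1) → ℝ := ⇑(hH.eigenvectorBasis (Tuple.sort hH.eigenvalues ⟨0, by omega⟩)) with hu0
    set u1 : Fin (m+1) → ℝ := ⇑(hH.eigenvectorBasis (Tuple.sort hH.eigenvalues ⟨1, by omega⟩)) with hu1
    have hk0 : lap G *ᵥ u0 = 0 := by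
      rw [hu0, hH.mulVec_eigenvectorBasis, ← sorted_eq hH, hs0, zero_smul]
    have hk1 : lap G *ᵥ u1 = 0 := by
      rw [hu1, hH.mulVec_eigenvectorBasis, ← sorted_eq hH, ← hlamdef, hlam0, zero_smul]
    have hconst : ∀ y : Fin (m+1) → ℝ, lap G *ᵥ y = 0 → ∀ i j, y i = y j := by
      intro y hy i j
      have h2 : Matrix.toLin' (G.lapMatrix ℝ) y = 0 := by
        rw [Matrix.toLin'_apply, ← lap_eq, hy]
      rw [Matrix.toLin'_apply, SimpleGraph.lapMatrix_mulVec_eq_zero_iff_forall_reachable] at h2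
      exact h2 i j (hGconn.preconnected i j)
    set z : Fin (m+1) := 0
    have hC0 : ∀ i, u0 i = u0 z := fun i => hconst u0 hk0 i z
    have hC1 : ∀ i, u1 i = u1 z := fun i => hconst u1 hk1 i z
    have hn0 : u0 ⬝ᵥ u0 = 1 := norm_basis_dot hH _
    have hn1 : u1 ⬝ᵥ u1 = 1 := norm_basis_dot hH _
    have ho : u0 ⬝ᵥ u1 = 0 := by
      refine orth_basis_dot hH ?_
      intro hsort
      have h00 := congrArg Fin.val ((Tuple.sort hH.eigenvalues).injective hsort)
      norm_num at h00
    have e0 : u0 ⬝ᵥ u0 = (m+1 : ℝ) * (u0 z * u0 z) := by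
      rw [dotProduct]
      rw [Finset.sum_congr rfl (fun i _ => by rw [hC0 i])]
      rw [Finset.sum_const, Finset.card_univ, Fintype.card_fin, nsmul_eq_mul]; push_cast; ring
    have e1 : u1 ⬝ᵥ u1 = (m+1 : ℝ) * (u1 z * u1 z) := by
      rw [dotProduct]
      rw [Finset.sum_congr rfl (fun i _ => by rw [hC1 i])]
      rw [Finset.sum_const, Finset.card_univ, Fintype.card_fin, nsmul_eq_mul]; push_cast; ring
    have eo : u0 ⬝ᵥ u1 = (m+1 : ℝ) * (u0 z * u1 z) := by
      rw [dotProduct]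
      rw [Finset.sum_congr rfl (fun i _ => by rw [hC0 i, hC1 i])]
      rw [Finset.sum_const, Finset.card_univ, Fintype.card_fin, nsmul_eq_mul]; push_cast; ring
    rw [hn0] at e0; rw [hn1] at e1; rw [ho] at eo
    have hM1 : (0:ℝ) < (m+1:ℝ) := by positivity
    nlinarith [e0, e1, eo]
  -- the eigenvector for lam
  set v : Fin (m+1) → ℝ := ⇑(hH.eigenvectorBasis (Tuple.sort hH.eigenvalues ⟨1, by omega⟩)) with hvdef
  have hv : lap G *ᵥ v = lam • v := by
    rw [hvdef, hH.mulVec_eigenvectorBasis, ← sorted_eq hH, ← hlamdef]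
  have hnorm : v ⬝ᵥ v = 1 := norm_basis_dot hH _
  have horth : (fun _ : Fin (m+1) => (1:ℝ)) ⬝ᵥ v = 0 := by
    have e2 : (fun _ : Fin (m+1) => (1:ℝ)) ⬝ᵥ (lap G *ᵥ v) = 0 := by
      rw [dotProduct_mulVec, ← mulVec_transpose, transpose_of_herm hH, h1, zero_dotProduct]
    rw [hv, dotProduct_smul, smul_eq_mul] at e2
    rcases mul_eq_zero.mp e2 with h | h
    · exact absurd h (ne_of_gt hlam_pos)
    · exact h
  set t : ℝ := v (Fin.last m) with ht
  set ψ : Fin m → ℝ := fun i => v i.castSucc with hψ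
  -- eigen equation at the pendant vertex
  have hnbr : G.neighborFinset (Fin.last m) = {p} := by
    ext b
    rw [SimpleGraph.mem_neighborFinset, hadj_last, Finset.mem_singleton]
  have hdeg : G.degree (Fin.last m) = 1 := by
    rw [← SimpleGraph.card_neighborFinset_eq_degree, hnbr, Finset.card_singleton]
  have hrow : v p = (1 - lam) * t := by
    have e2 : (lap G *ᵥ v) (Fin.last m) = lam * t := by rw [hv]; simp [ht]
    rw [lap_eq, SimpleGraph.lapMatrix_mulVec_apply, hdeg, hnbr] at e2
    simp only [Finset.sum_singleton, Nat.cast_one, one_mul] at e2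
    rw [← ht] at e2
    linarith
  -- quadratic form split
  have hquadG : v ⬝ᵥ (lap G *ᵥ v) =
      (∑ i : Fin m, ∑ j : Fin m, if G'.Adj i j then (ψ i - ψ j)^2 else 0) / 2
        + (v p - t)^2 := by
    rw [lap_eq, ← Matrix.toLinearMap₂'_apply', SimpleGraph.lapMatrix_toLinearMap₂']
    rw [Fin.sum_univ_castSucc]
    have inner_split : ∀ i : Fin m,
        (∑ j : Fin (m+1), if G.Adj i.castSucc j then (v i.castSucc - v j)^2 else 0)
          = (∑ j : Fin m, if G'.Adj i j then (ψ i - ψ j)^2 else 0)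
            + (if i = pt then (v p - t)^2 else 0) := by
      intro i
      rw [Fin.sum_univ_castSucc]
      congr 1
      · refine Finset.sum_congr rfl fun j _ => ?_
        beta_reduce
        rw [if_congr (hadj_cast i j) rfl rfl]
      · beta_reduce
        rw [if_congr (hadj_cast_last i) rfl rfl]
        rcases eq_or_ne i pt with rfl | h
        · rw [if_pos rfl]
        · rw [if_neg h]; rw [if_neg h]
    have last_split :
        (∑ j : Fin (m+1), if G.Adj (Fin.last m) j then (v (Fin.last m) - v j)^2 else 0)
          = (v p - t)^2 := by
      rw [Finset.sum_eq_single p]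
      · beta_reduce
        rw [if_pos ((hadj_last p).mpr rfl)]; ring
      · intro b _ hb
        beta_reduce
        rw [if_neg (fun hadj => hb ((hadj_last b).mp hadj))]
      · intro hp'; exact absurd (Finset.mem_univ _) hp'
    rw [last_split]
    rw [Finset.sum_congr rfl (fun i _ => inner_split i)]
    rw [Finset.sum_add_distrib]
    rw [Finset.sum_ite_eq' Finset.univ pt (fun _ => (v p - t)^2)]
    rw [if_pos (Finset.mem_univ pt)]
    have hppt : v p = ψ pt := rfl
    ring
  have hquadG' : ψ ⬝ᵥ (lap G' *ᵥ ψ) =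
      (∑ i : Fin m, ∑ j : Fin m, if G'.Adj i j then (ψ i - ψ j)^2 else 0) / 2 := by
    rw [lap_eq, ← Matrix.toLinearMap₂'_apply', SimpleGraph.lapMatrix_toLinearMap₂']
  set Qψ : ℝ := ψ ⬝ᵥ (lap G' *ᵥ ψ) with hQ
  have hlam_eq : lam = Qψ + (v p - t)^2 := by
    have e2 : v ⬝ᵥ (lap G *ᵥ v) = lam := by
      rw [hv, dotProduct_smul, smul_eq_mul, hnorm, mul_one]
    rw [← e2, hquadG, ← hquadG']
  -- norms
  have hψψ : ψ ⬝ᵥ ψ = 1 - t * t := by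
    have : v ⬝ᵥ v = (∑ i : Fin m, ψ i * ψ i) + t * t := by
      rw [dotProduct, Fin.sum_univ_castSucc]
    rw [hnorm] at this
    rw [dotProduct]
    linarith
  have hψsum : (fun _ : Fin m => (1:ℝ)) ⬝ᵥ ψ = -t := by
    have : (fun _ : Fin (m+1) => (1:ℝ)) ⬝ᵥ v = (∑ i : Fin m, ψ i) + t := by
      rw [dotProduct, Fin.sum_univ_castSucc]; simp; rfl
    rw [horth] at this
    rw [dotProduct]
    simp only [one_mul]
    linarith
  -- the shifted test vector
  set Mr : ℝ := (m : ℝ) with hMr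
  have hMrpos : (0:ℝ) < Mr := by rw [hMr]; exact_mod_cast (by omega : 0 < m)
  have hMr34 : (34:ℝ) ≤ Mr := by rw [hMr]; exact_mod_cast hm
  have hSumPsi : (∑ i : Fin m, ψ i) = -t := by
    have h5 := hψsum; rw [dotProduct] at h5; simpa using h5
  have h1'' : lap G' *ᵥ (fun _ : Fin m => (1:ℝ)) = 0 := h1'
  have hψsq : (∑ i : Fin m, ψ i * ψ i) = 1 - t * t := by
    have h5 := hψψ; rwa [dotProduct] at h5
  have hMrne : Mr ≠ 0 := ne_of_gt hMrpos
  set c : ℝ := t / Mr with hc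
  set φ : Fin m → ℝ := fun i => ψ i + c with hφ
  have hφdef : φ = (fun i => ψ i) + c • (fun _ : Fin m => (1:ℝ)) := by
    funext i; simp [hφ]
  have hφ1 : (fun _ : Fin m => (1:ℝ)) ⬝ᵥ φ = 0 := by
    rw [dotProduct]
    simp only [one_mul, hφ]
    rw [Finset.sum_add_distrib, hSumPsi, Finset.sum_const, nsmul_eq_mul,
        Finset.card_univ, Fintype.card_fin, ← hMr, hc]
    field_simp; ring
  have hφφ : φ ⬝ᵥ φ = 1 - t*t - t*t/Mr := by
    have e : ∀ i : Fin m, φ i * φ i = ψ i * ψ i + (2*c)*ψ i + c*c := fun i => by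
      simp only [hφ]; ring
    rw [dotProduct, Finset.sum_congr rfl (fun i _ => e i)]
    rw [Finset.sum_add_distrib, Finset.sum_add_distrib, ← Finset.mul_sum, hSumPsi, hψsq,
        Finset.sum_const, nsmul_eq_mul, Finset.card_univ, Fintype.card_fin, ← hMr, hc]
    field_simp
    ring
  have hmulφ : lap G' *ᵥ φ = lap G' *ᵥ ψ := by
    rw [hφdef, mulVec_add, mulVec_smul, h1'', smul_zero, add_zero]
  have hone : (fun _ : Fin m => (1:ℝ)) ⬝ᵥ (lap G' *ᵥ ψ) = 0 := by
    rw [dotProduct_mulVec, ← mulVec_transpose, transpose_of_herm hH', h1'', zero_dotProduct]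
  have hQφ : φ ⬝ᵥ (lap G' *ᵥ φ) = Qψ := by
    rw [hmulφ, hφdef, add_dotProduct, smul_dotProduct, hone, smul_zero, add_zero, hQ]
  have hray : lam' * (φ ⬝ᵥ φ) ≤ φ ⬝ᵥ (lap G' *ᵥ φ) :=
    rayleigh_lower hH' hPSD' hN' h1' hφ1
  rw [hQφ] at hray
  have hQψnn : 0 ≤ ψ ⬝ᵥ (lap G' *ᵥ ψ) := by simpa using hPSD'.dotProduct_mulVec_nonneg ψ
  rw [← hQ] at hQψnn
  have hψnn : 0 ≤ ψ ⬝ᵥ ψ := Finset.sum_nonneg fun i _ => mul_self_nonneg _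
  have ht1 : t * t ≤ 1 := by
    have h5 := hψnn; rw [hψψ] at h5; linarith
  have hptle : φ pt * φ pt ≤ φ ⬝ᵥ φ :=
    Finset.single_le_sum (f := fun i => φ i * φ i) (fun i _ => mul_self_nonneg _)
      (Finset.mem_univ pt)
  have hvp : φ pt = v p + c := rfl
  have hdivnn : 0 ≤ t * t / Mr := div_nonneg (mul_self_nonneg t) hMrpos.le
  have hsq : (φ pt - (t + c))^2 ≤ lam := by
    rw [show φ pt - (t + c) = v p - t from by rw [hvp]; ring]
    nlinarith only [hQψnn, hlam_eq]
  clear_value Qψ φ c Mr ψ t v lam lam' pt p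
  rcases le_or_gt (t*t) 0.68 with hcase | hcase
  · have hu : t * t / Mr ≤ 0.02 := by
      rw [div_le_iff₀ hMrpos]; nlinarith only [hcase, hMr34]
    have hS : (0.3:ℝ) ≤ φ ⬝ᵥ φ := by rw [hφφ]; linarith
    have hQle : Qψ ≤ lam := by nlinarith only [sq_nonneg (v p - t), hlam_eq]
    nlinarith only [hray, hS, hlam'pos, hQle, hlam3]
  · have ha2 : φ pt * φ pt ≤ 1 - t*t - t*t/Mr := by rw [← hφφ]; exact hptle
    have hc2 : c * t = t*t/Mr := by rw [hc]; ring
    have hTT : t*t ≤ (t + c)*(t + c) := by nlinarith only [sq_nonneg c, hdivnn, hc2]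
    nlinarith only [hsq, ha2, hTT, hcase, hlam04, hdivnn,
      sq_nonneg (7*(t+c) - 10*(φ pt)), sq_nonneg (7*(t+c) + 10*(φ pt))]
end

section
/- (Min-max duality for effective resistance.) Let G = (V,E) be a connected finite simple graph on n ≥ 2 vertices with Laplacian L_G, and let s ≠ t be two vertices. Then the reciprocal of the energy minimum equals the maximal Rayleigh-type ratio: 1 / min{ Σ_{{u,v}∈E} (φ(u)−φ(v))² : φ : V → ℝ, φ(s)=1, φ(t)=0 } = sup{ ⟨𝟏_s − 𝟏_t, φ⟩² / (φᵀ L_G φ) : φ : V → ℝ, φ ⊥ 𝟏, φ ≠ 0 }, and the supremum is attained; in other words, R_G(s,t) = max_{φ ⊥ 𝟏, φ ≠ 0} ⟨𝟏_s − 𝟏_t, φ⟩² / (φᵀ L_G φ). -/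
open Matrix

open Classical in
/-- The Dirichlet energy `Σ_{{u,v} ∈ E} (φ u - φ v)²` of a potential `φ`,
written as half the sum over ordered pairs. -/
noncomputable def energy {V : Type*} [Fintype V] (G : SimpleGraph V) (φ : V → ℝ) : ℝ :=
  (1/2) * ∑ u : V, ∑ v : V, if G.Adj u v then (φ u - φ v)^2 else 0

/-- The `s`-`t` effective resistance: the reciprocal of the minimal Dirichlet energy among
potentials with `φ s = 1` and `φ t = 0`. -/
noncomputable def effRes {V : Type*} [Fintype V] (G : SimpleGraph V) (s t : V) : ℝ :=
  1 / sInf (energy G '' {φ : V → ℝ | φ s = 1 ∧ φ t = 0})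

/-- Cauchy–Schwarz inequality for the bilinear form of a positive semidefinite matrix. -/
lemma cs_psd {n : ℕ} (M : Matrix (Fin n) (Fin n) ℝ) (hM : M.PosSemidef) (x y : Fin n → ℝ) :
    (x ⬝ᵥ (M *ᵥ y))^2 ≤ (x ⬝ᵥ (M *ᵥ x)) * (y ⬝ᵥ (M *ᵥ y)) := by
  have hsym : ∀ u v : Fin n → ℝ, u ⬝ᵥ (M *ᵥ v) = v ⬝ᵥ (M *ᵥ u) := by
    intro u v
    rw [dotProduct_mulVec, ← mulVec_transpose, dotProduct_comm,
      (Matrix.conjTranspose_eq_transpose_of_trivial M ▸ hM.1.eq : Mᵀ = M)]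
  have key : ∀ c : ℝ, 0 ≤ (y ⬝ᵥ (M *ᵥ y)) * (c * c) + (2 * (x ⬝ᵥ (M *ᵥ y))) * c
      + (x ⬝ᵥ (M *ᵥ x)) := by
    intro c
    have h := hM.dotProduct_mulVec_nonneg (x + c • y)
    rw [star_trivial] at h
    have hexp : (x + c • y) ⬝ᵥ (M *ᵥ (x + c • y)) =
        (y ⬝ᵥ (M *ᵥ y)) * (c * c) + (2 * (x ⬝ᵥ (M *ᵥ y))) * c + (x ⬝ᵥ (M *ᵥ x)) := by
      rw [mulVec_add, mulVec_smul, dotProduct_add, add_dotProduct, add_dotProduct]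
      simp only [dotProduct_smul, smul_dotProduct, smul_eq_mul]
      rw [hsym y x]
      ring
    linarith [hexp ▸ h]
  have hd := discrim_le_zero key
  rw [discrim] at hd
  nlinarith [hd]

open Classical in
/-- The Dirichlet energy is the Laplacian quadratic form. -/
lemma energy_eq_quadForm {n : ℕ} (G : SimpleGraph (Fin n)) (φ : Fin n → ℝ) :
    energy G φ = φ ⬝ᵥ ((G.lapMatrix ℝ) *ᵥ φ) := by
  rw [energy, ← Matrix.toLinearMap₂'_apply', SimpleGraph.lapMatrix_toLinearMap₂']
  ring

open Classical in
/-- Solvability of the Poisson problem `L x = 𝟙_s - 𝟙_t` with a mean-zero solution. -/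
lemma exists_potential {n : ℕ} (hn : 2 ≤ n) (G : SimpleGraph (Fin n)) (hG : G.Connected)
    (s t : Fin n) :
    ∃ x : Fin n → ℝ, (∑ w : Fin n, x w = 0) ∧
      (G.lapMatrix ℝ) *ᵥ x = (fun u => (if u = s then (1:ℝ) else 0) - (if u = t then 1 else 0)) := by
  set L := G.lapMatrix ℝ with hL
  set b : Fin n → ℝ := fun u => (if u = s then (1:ℝ) else 0) - (if u = t then 1 else 0) with hb
  set T := Matrix.toLin' L with hT
  set f : (Fin n → ℝ) →ₗ[ℝ] ℝ :=
    { toFun := fun x => ∑ w : Fin n, x w,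
      map_add' := fun x y => by simp [Finset.sum_add_distrib],
      map_smul' := fun c x => by simp [Finset.mul_sum] } with hf
  have hn0 : (n : ℝ) ≠ 0 := Nat.cast_ne_zero.2 (by omega)
  have hker : Module.finrank ℝ (LinearMap.ker T) = 1 := by
    rw [hT, hL, ← SimpleGraph.card_connectedComponent_eq_finrank_ker_toLin'_lapMatrix]
    rw [Fintype.card_eq_one_iff]
    refine ⟨G.connectedComponentMk s, ?_⟩
    intro c
    induction c using SimpleGraph.ConnectedComponent.ind with
    | _ v => exact SimpleGraph.ConnectedComponent.sound (hG.preconnected v s)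
  have hfsurj : Function.Surjective f := by
    intro y
    refine ⟨fun _ => y / n, ?_⟩
    show ∑ _w : Fin n, y / (n:ℝ) = y
    rw [Finset.sum_const, Finset.card_univ, Fintype.card_fin, nsmul_eq_mul]
    field_simp
  have hfin : Module.finrank ℝ (Fin n → ℝ) = n := by
    simp [Module.finrank_pi]
  have hkerf : Module.finrank ℝ (LinearMap.ker f) = n - 1 := by
    have h1 := LinearMap.finrank_range_add_finrank_ker f
    rw [LinearMap.range_eq_top.2 hfsurj, finrank_top, hfin, Module.finrank_self] at h1
    omega
  have hrangeT : Module.finrank ℝ (LinearMap.range T) = n - 1 := by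
    have h2 := LinearMap.finrank_range_add_finrank_ker T
    rw [hker, hfin] at h2
    omega
  have hle : LinearMap.range T ≤ LinearMap.ker f := by
    rintro y ⟨x, rfl⟩
    simp only [LinearMap.mem_ker]
    show ∑ w : Fin n, (T x) w = 0
    have hTx : T x = L *ᵥ x := Matrix.toLin'_apply L x
    rw [hTx]
    have h1 : ∑ w : Fin n, (L *ᵥ x) w = (fun _ => (1:ℝ)) ⬝ᵥ (L *ᵥ x) := by
      simp [dotProduct]
    rw [h1, dotProduct_mulVec, ← mulVec_transpose,
      (SimpleGraph.isSymm_lapMatrix ℝ G : Lᵀ = L),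
      SimpleGraph.lapMatrix_mulVec_const_eq_zero, zero_dotProduct]
  have heq : LinearMap.range T = LinearMap.ker f :=
    Submodule.eq_of_le_of_finrank_eq hle (by rw [hrangeT, hkerf])
  have hbmem : b ∈ LinearMap.ker f := by
    simp only [LinearMap.mem_ker, hf, hb, LinearMap.coe_mk, AddHom.coe_mk]
    rw [Finset.sum_sub_distrib]
    simp [Finset.sum_ite_eq']
  rw [← heq] at hbmem
  obtain ⟨x0, hx0⟩ := hbmem
  refine ⟨fun u => x0 u - (∑ w : Fin n, x0 w)/n, ?_, ?_⟩
  · rw [Finset.sum_sub_distrib, Finset.sum_const, Finset.card_univ, Fintype.card_fin,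
      nsmul_eq_mul]
    field_simp
    ring
  · have hsplit : (fun u => x0 u - (∑ w : Fin n, x0 w)/n)
        = x0 - ((∑ w : Fin n, x0 w)/n) • (fun _ => (1:ℝ)) := by
      ext u; simp [mul_comm]
    rw [hsplit, mulVec_sub, mulVec_smul, SimpleGraph.lapMatrix_mulVec_const_eq_zero,
      smul_zero, sub_zero, ← Matrix.toLin'_apply L x0]
    exact hx0

/-- **Min-max duality for effective resistance.**
For a connected graph `G` on `n ≥ 2` vertices and distinct vertices `s ≠ t`, the effective
resistance `R_G(s,t) = 1 / min { Σ_{{u,v}∈E} (φ u - φ v)² : φ s = 1, φ t = 0 }` is the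
greatest element (so the supremum, and it is attained) of the set of Rayleigh-type ratios
`⟨𝟙_s - 𝟙_t, φ⟩² / (φᵀ L_G φ)` over all `φ ⊥ 𝟙`, `φ ≠ 0`. -/
theorem effRes_minmax_duality
    (n : ℕ) (hn : 2 ≤ n) (G : SimpleGraph (Fin n)) (hG : G.Connected)
    (s t : Fin n) (hst : s ≠ t) :
    IsGreatest
      {r : ℝ | ∃ φ : Fin n → ℝ, (∑ w : Fin n, φ w = 0) ∧ φ ≠ 0 ∧
        r = (φ s - φ t)^2 / (φ ⬝ᵥ (lap G *ᵥ φ))}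
      (effRes G s t) := by
  classical
  obtain ⟨x, hxsum, hxL⟩ := exists_potential hn G hG s t
  set b : Fin n → ℝ := fun u => (if u = s then (1:ℝ) else 0) - (if u = t then 1 else 0) with hb
  have hlapL : lap G = G.lapMatrix ℝ := rfl
  set L := G.lapMatrix ℝ with hL
  have hn0 : (n : ℝ) ≠ 0 := Nat.cast_ne_zero.2 (by omega)
  have hpsd : L.PosSemidef := SimpleGraph.posSemidef_lapMatrix ℝ G
  have hdotb : ∀ φ : Fin n → ℝ, φ ⬝ᵥ b = φ s - φ t := by
    intro φ
    simp only [hb, dotProduct, mul_sub, mul_ite, mul_one, mul_zero]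
    rw [Finset.sum_sub_distrib]
    simp [Finset.sum_ite_eq']
  have hbs : b s = 1 := by simp [hb, hst]
  have hnn : ∀ φ : Fin n → ℝ, 0 ≤ φ ⬝ᵥ (L *ᵥ φ) := by
    intro φ
    have := hpsd.dotProduct_mulVec_nonneg φ
    rwa [star_trivial] at this
  have hzero : ∀ φ : Fin n → ℝ, φ ⬝ᵥ (L *ᵥ φ) = 0 → ∀ i j : Fin n, φ i = φ j := by
    intro φ h i j
    have h2 : Matrix.toLinearMap₂' ℝ L φ φ = 0 := by rwa [Matrix.toLinearMap₂'_apply']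
    exact (SimpleGraph.lapMatrix_toLinearMap₂'_apply'_eq_zero_iff_forall_reachable G φ).1 h2 i j
      (hG.preconnected i j)
  set R := x s - x t with hR
  have hxLx : x ⬝ᵥ (L *ᵥ x) = R := by rw [hxL, hdotb]
  have hRpos : 0 < R := by
    rcases (hnn x).lt_or_eq with hlt | heq0
    · rwa [hxLx] at hlt
    · exfalso
      have hc := hzero x heq0.symm
      have hxconst : x = (x s) • (fun _ => (1:ℝ)) := by
        ext u; simp [hc u s]
      have h3 : L *ᵥ x = 0 := by
        rw [hxconst, mulVec_smul, SimpleGraph.lapMatrix_mulVec_const_eq_zero, smul_zero]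
      rw [hxL] at h3
      have := congrFun h3 s
      rw [hbs] at this
      simp at this
  have hxne : x ≠ 0 := by
    intro h
    rw [h, mulVec_zero] at hxL
    have := congrFun hxL s
    rw [hbs] at this
    simp at this
  have hposdef : ∀ φ : Fin n → ℝ, (∑ w : Fin n, φ w = 0) → φ ≠ 0 → 0 < φ ⬝ᵥ (L *ᵥ φ) := by
    intro φ hsum hne
    rcases (hnn φ).lt_or_eq with hlt | heq0
    · exact hlt
    · exfalso
      have hc := hzero φ heq0.symm
      have hφconst : ∀ u, φ u = φ s := fun u => hc u s
      have hsum2 : ∑ w : Fin n, φ w = n * φ s := by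
        rw [Finset.sum_congr rfl (fun w _ => hφconst w), Finset.sum_const, Finset.card_univ,
          Fintype.card_fin, nsmul_eq_mul]
      rw [hsum2] at hsum
      have hφs : φ s = 0 := by
        rcases mul_eq_zero.1 hsum with h | h
        · exact absurd h hn0
        · exact h
      exact hne (funext fun u => by rw [hφconst u, hφs]; rfl)
  -- compute the infimum
  set S := energy G '' {φ : Fin n → ℝ | φ s = 1 ∧ φ t = 0} with hS
  have hmem : (1/R) ∈ S := by
    refine ⟨fun u => (x u - x t)/R, ⟨?_, by simp⟩, ?_⟩
    · show (x s - x t)/R = 1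
      rw [← hR, div_self hRpos.ne']
    · have hφ : (fun u => (x u - x t)/R) = R⁻¹ • (x - (x t) • (fun _ => (1:ℝ))) := by
        ext u; simp; ring
      rw [energy_eq_quadForm, hφ, mulVec_smul, mulVec_sub, mulVec_smul,
        SimpleGraph.lapMatrix_mulVec_const_eq_zero, smul_zero, sub_zero]
      rw [show (G.lapMatrix ℝ) *ᵥ x = b from hxL]
      rw [smul_dotProduct, dotProduct_smul, hdotb]
      simp only [Pi.sub_apply, Pi.smul_apply, smul_eq_mul, mul_one]
      rw [← hR]
      field_simp
      ring
  have hlb : ∀ y ∈ S, 1/R ≤ y := by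
    rintro y ⟨ψ, ⟨hψs, hψt⟩, rfl⟩
    have h1 : ψ ⬝ᵥ (L *ᵥ x) = 1 := by rw [hxL, hdotb, hψs, hψt, sub_zero]
    have hcs := cs_psd L hpsd ψ x
    rw [h1, hxLx, one_pow] at hcs
    rw [energy_eq_quadForm, ← hL]
    rw [div_le_iff₀ hRpos]
    linarith
  have hSinf : sInf S = 1/R :=
    le_antisymm (csInf_le ⟨1/R, fun y hy => hlb y hy⟩ hmem) (le_csInf ⟨_, hmem⟩ hlb)
  have heff : effRes G s t = R := by
    rw [effRes, ← hS, hSinf, one_div_one_div]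
  constructor
  · refine ⟨x, hxsum, hxne, ?_⟩
    rw [heff, hlapL, hxLx, ← hR, sq, mul_div_assoc, div_self hRpos.ne', mul_one]
  · rintro r ⟨φ, hφsum, hφne, rfl⟩
    rw [heff, hlapL]
    have hφpos := hposdef φ hφsum hφne
    have h2 : φ s - φ t = φ ⬝ᵥ (L *ᵥ x) := by rw [hxL, hdotb]
    have hcs := cs_psd L hpsd φ x
    rw [hxLx] at hcs
    rw [div_le_iff₀ hφpos, h2]
    linarith
end

section
/- Let G = (V,E) be a connected finite simple graph and let e = {s,t} ∈ E be a bridge of G. Let H be the connected component of G − e containing s, regarded as a graph in its own right. Then for every pair of distinct vertices u, v belonging to H, the effective resistance is unchanged: R_G(u,v) = R_H(u,v). -/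
open Classical in
private lemma sum_dite_mem {V : Type*} [Fintype V] (S : Set V) [Fintype {x // x ∈ S}]
    [DecidablePred (· ∈ S)] (f : {x // x ∈ S} → ℝ) :
    ∑ a : S, f a = ∑ x : V, if hx : x ∈ S then f ⟨x, hx⟩ else 0 := by
  classical
  calc ∑ a : S, f a
      = ∑ a : S, (fun x : V => if hx : x ∈ S then f ⟨x, hx⟩ else 0) a.val := by
        refine Finset.sum_congr rfl (fun a _ => ?_)
        show f a = if hx : ↑a ∈ S then f ⟨↑a, hx⟩ else 0
        rw [dif_pos a.2]
    _ = ∑ x ∈ S.toFinset, (fun x : V => if hx : x ∈ S then f ⟨x, hx⟩ else 0) x := by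
        exact Finset.sum_set_coe (f := fun x : V => if hx : x ∈ S then f ⟨x, hx⟩ else 0) S
    _ = ∑ x : V, (if hx : x ∈ S then f ⟨x, hx⟩ else 0) := by
        refine Finset.sum_subset (Finset.subset_univ _) ?_
        intro x _ hx
        rw [dif_neg (by simpa using hx)]

private lemma energy_nonneg' {V : Type*} [Fintype V] (G : SimpleGraph V) (φ : V → ℝ) :
    0 ≤ energy G φ := by
  unfold energy
  refine mul_nonneg (by norm_num) ?_
  refine Finset.sum_nonneg fun x _ => Finset.sum_nonneg fun y _ => ?_
  split <;> positivity

set_option maxHeartbeats 1000000 in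
open Classical in
/-- **Effective resistances inside one side of a bridge are unchanged.**
Let `G` be connected, and let `{s,t}` be a bridge of `G`, i.e. `s` and `t` are not reachable
from one another after the edge `{s,t}` is deleted.  Let `H` be the connected component of
`G - e` containing `s`, regarded as a graph in its own right (the induced subgraph of
`G - e` on the vertex set `{w | s ⟶ w in G - e}`).  Then for all distinct vertices `u, v`
of `H`, `R_G(u,v) = R_H(u,v)`. -/
theorem effRes_component_of_bridge
    {V : Type*} [Fintype V] (G : SimpleGraph V) (hG : G.Connected)
    (s t : V) (hst : G.Adj s t)
    (hbridge : ¬ (G.deleteEdges {s(s, t)}).Reachable s t)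
    (u v : V)
    (hu : (G.deleteEdges {s(s, t)}).Reachable s u)
    (hv : (G.deleteEdges {s(s, t)}).Reachable s v)
    (huv : u ≠ v) :
    effRes G u v =
      effRes ((G.deleteEdges {s(s, t)}).induce
          {w : V | (G.deleteEdges {s(s, t)}).Reachable s w})
        ⟨u, hu⟩ ⟨v, hv⟩ := by
  classical
  set G' := G.deleteEdges {s(s, t)} with hG'def
  set S : Set V := {w : V | G'.Reachable s w} with hSdef
  set H := G'.induce S with hHdef
  have hsS : s ∈ S := SimpleGraph.Reachable.refl s
  have htS : t ∉ S := fun h => hbridge h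
  have hclosed : ∀ {x y : V}, x ∈ S → G'.Adj x y → y ∈ S :=
    fun hx hxy => hx.trans hxy.reachable
  have hadj_iff : ∀ (x y : V) (hx : x ∈ S) (hy : y ∈ S),
      H.Adj ⟨x, hx⟩ ⟨y, hy⟩ ↔ G.Adj x y := by
    intro x y hx hy
    constructor
    · intro h
      have h' : G'.Adj x y := h
      rw [hG'def, SimpleGraph.deleteEdges_adj] at h'
      exact h'.1
    · intro h
      have hne : s(x, y) ∉ ({s(s, t)} : Set (Sym2 V)) := by
        intro hmem
        rw [Set.mem_singleton_iff, Sym2.eq_iff] at hmem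
        rcases hmem with ⟨rfl, rfl⟩ | ⟨rfl, rfl⟩
        · exact htS hy
        · exact htS hx
      show G'.Adj x y
      rw [hG'def, SimpleGraph.deleteEdges_adj]
      exact ⟨h, hne⟩
  have energyH : ∀ ψ : S → ℝ,
      energy H ψ = (1/2) * ∑ x : V, ∑ y : V,
        (if hx : x ∈ S then (if hy : y ∈ S then
            (if H.Adj ⟨x, hx⟩ ⟨y, hy⟩ then (ψ ⟨x, hx⟩ - ψ ⟨y, hy⟩)^2 else 0)
          else 0) else 0) := by
    intro ψ
    unfold energy
    congr 1
    refine (sum_dite_mem S (fun a => ∑ b : S, @ite _ (H.Adj a b) (Classical.propDecidable _) ((ψ a - ψ b)^2) 0)).trans ?_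
    refine Finset.sum_congr rfl fun x _ => ?_
    by_cases hx : x ∈ S
    · simp only [dif_pos hx]
      exact (sum_dite_mem S (fun b => @ite _ (H.Adj ⟨x, hx⟩ b) (Classical.propDecidable _) ((ψ ⟨x, hx⟩ - ψ b)^2) 0)).trans (by congr!)
    · simp only [dif_neg hx]
      exact Finset.sum_const_zero.symm
  have key1 : ∀ φ : V → ℝ, energy H (fun a : S => φ a.val) ≤ energy G φ := by
    intro φ
    rw [energyH]
    unfold energy
    refine mul_le_mul_of_nonneg_left ?_ (by norm_num)
    refine Finset.sum_le_sum fun x _ => Finset.sum_le_sum fun y _ => ?_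
    by_cases hx : x ∈ S
    · rw [dif_pos hx]
      by_cases hy : y ∈ S
      · rw [dif_pos hy]
        by_cases hH : H.Adj ⟨x, hx⟩ ⟨y, hy⟩
        · rw [if_pos hH, if_pos ((hadj_iff x y hx hy).mp hH)]
        · rw [if_neg hH]; split <;> positivity
      · rw [dif_neg hy]; split <;> positivity
    · rw [dif_neg hx]; split <;> positivity
  have key2 : ∀ ψ : S → ℝ,
      energy G (fun x => if hx : x ∈ S then ψ ⟨x, hx⟩ else ψ ⟨s, hsS⟩) = energy H ψ := by
    intro ψ
    set φ : V → ℝ := fun x => if hx : x ∈ S then ψ ⟨x, hx⟩ else ψ ⟨s, hsS⟩ with hφdef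
    have hφS : ∀ (z : V) (hz : z ∈ S), φ z = ψ ⟨z, hz⟩ := by
      intro z hz; rw [hφdef]; exact dif_pos hz
    have hφn : ∀ z : V, z ∉ S → φ z = ψ ⟨s, hsS⟩ := by
      intro z hz; rw [hφdef]; exact dif_neg hz
    rw [energyH]
    unfold energy
    congr 1
    refine Finset.sum_congr rfl fun x _ => Finset.sum_congr rfl fun y _ => ?_
    by_cases hx : x ∈ S
    · by_cases hy : y ∈ S
      · rw [dif_pos hx, dif_pos hy, hφS x hx, hφS y hy]
        exact if_congr (hadj_iff x y hx hy).symm rfl rfl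
      · rw [dif_pos hx, dif_neg hy]
        by_cases hG2 : G.Adj x y
        · rw [if_pos hG2]
          have hnadj : ¬ G'.Adj x y := fun h => hy (hclosed hx h)
          rw [hG'def, SimpleGraph.deleteEdges_adj] at hnadj
          push_neg at hnadj
          have hmem := hnadj hG2
          rw [Set.mem_singleton_iff, Sym2.eq_iff] at hmem
          rcases hmem with ⟨rfl, rfl⟩ | ⟨rfl, rfl⟩
          · rw [hφS x hx, hφn y hy, sub_self]
            norm_num
          · exact absurd hx htS
        · rw [if_neg hG2]
    · rw [dif_neg hx]
      by_cases hG2 : G.Adj x y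
      · rw [if_pos hG2]
        by_cases hy : y ∈ S
        · have hnadj : ¬ G'.Adj x y := fun h => hx (hclosed hy h.symm)
          rw [hG'def, SimpleGraph.deleteEdges_adj] at hnadj
          push_neg at hnadj
          have hmem := hnadj hG2
          rw [Set.mem_singleton_iff, Sym2.eq_iff] at hmem
          rcases hmem with ⟨rfl, rfl⟩ | ⟨rfl, rfl⟩
          · exact absurd hy htS
          · rw [hφn x hx, hφS y hy, sub_self]
            norm_num
        · rw [hφn x hx, hφn y hy, sub_self]
          norm_num
      · rw [if_neg hG2]
  have hB_ne : (energy H '' {ψ : S → ℝ | ψ ⟨u, hu⟩ = 1 ∧ ψ ⟨v, hv⟩ = 0}).Nonempty := by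
    refine ⟨_, ⟨fun a : S => if a = ⟨u, hu⟩ then 1 else 0, ⟨if_pos rfl, ?_⟩, rfl⟩⟩
    exact if_neg (fun h => huv (congrArg Subtype.val h).symm)
  have hA_ne : (energy G '' {φ : V → ℝ | φ u = 1 ∧ φ v = 0}).Nonempty :=
    ⟨_, ⟨fun w : V => if w = u then 1 else 0, ⟨if_pos rfl, if_neg huv.symm⟩, rfl⟩⟩
  have hA_bdd : BddBelow (energy G '' {φ : V → ℝ | φ u = 1 ∧ φ v = 0}) := by
    refine ⟨0, ?_⟩
    rintro a ⟨φ, -, rfl⟩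
    exact energy_nonneg' _ _
  have hB_bdd : BddBelow (energy H '' {ψ : S → ℝ | ψ ⟨u, hu⟩ = 1 ∧ ψ ⟨v, hv⟩ = 0}) := by
    refine ⟨0, ?_⟩
    rintro a ⟨ψ, -, rfl⟩
    exact energy_nonneg' _ _
  have hAB : sInf (energy G '' {φ : V → ℝ | φ u = 1 ∧ φ v = 0})
      = sInf (energy H '' {ψ : S → ℝ | ψ ⟨u, hu⟩ = 1 ∧ ψ ⟨v, hv⟩ = 0}) := by
    apply le_antisymm
    · refine le_csInf hB_ne ?_
      rintro b ⟨ψ, ⟨hψu, hψv⟩, rfl⟩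
      refine csInf_le_of_le hA_bdd
        ⟨fun x => if hx : x ∈ S then ψ ⟨x, hx⟩ else ψ ⟨s, hsS⟩, ⟨?_, ?_⟩, rfl⟩
        (le_of_eq (key2 ψ))
      · show (if hx : u ∈ S then ψ ⟨u, hx⟩ else ψ ⟨s, hsS⟩) = 1
        rw [dif_pos (show u ∈ S from hu)]; exact hψu
      · show (if hx : v ∈ S then ψ ⟨v, hx⟩ else ψ ⟨s, hsS⟩) = 0
        rw [dif_pos (show v ∈ S from hv)]; exact hψv
    · refine le_csInf hA_ne ?_
      rintro a ⟨φ, ⟨hφu, hφv⟩, rfl⟩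
      exact csInf_le_of_le hB_bdd ⟨fun a : S => φ a.val, ⟨hφu, hφv⟩, rfl⟩ (key1 φ)
  show effRes G u v = effRes H ⟨u, hu⟩ ⟨v, hv⟩
  unfold effRes
  rw [hAB]
end
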